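/- Consider a game with N players with continuously differentiable payoff functions f_i : ℝ^N → ℝ such that each f_i(x_i, x_{-i}) is concave in x_i, and suppose the pseudogradient G(x) = (∂f_1/∂x_1(x),…,∂f_N/∂x_N(x)) satisfies (x − z)ᵀ(G(x) − G(z)) < 0 for all x ≠ z in ℝ^N. Then the game has at most one Nash equilibrium. -/

import Mathlib

open scoped BigOperators

/-- Partial derivative of `f : ℝ^n → ℝ` with respect to the `j`-th coordinate at `x`. -/
noncomputable def pdv {n : ℕ} (f : (Fin n → ℝ) → ℝ) (j : Fin n) (x : Fin n → ℝ) : ℝ :=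
  deriv (fun t => f (Function.update x j t)) (x j)

lemma pdv_eq_zero_of_max {n : ℕ} {f : (Fin n → ℝ) → ℝ} (hf : ContDiff ℝ 1 f)
    {i : Fin n} {x : Fin n → ℝ} (h : ∀ t, f (Function.update x i t) ≤ f x) :
    pdv f i x = 0 := by
  have hdiff : Differentiable ℝ (fun t => f (Function.update x i t)) :=
    (hf.differentiable one_ne_zero).comp (fun t => (hasFDerivAt_update x t).differentiableAt)
  have hmax : IsLocalMax (fun t => f (Function.update x i t)) (x i) := by
    apply Filter.Eventually.of_forall
    intro t
    simpa [Function.update_eq_self] using h t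
  exact hmax.deriv_eq_zero

theorem statement9 {N : ℕ} (f : Fin N → (Fin N → ℝ) → ℝ)
    (hf : ∀ i, ContDiff ℝ 1 (f i))
    (hconcave : ∀ (i : Fin N) (x : Fin N → ℝ),
      ConcaveOn ℝ Set.univ (fun t => f i (Function.update x i t)))
    (hmono : ∀ x z : Fin N → ℝ, x ≠ z →
      ∑ i, (x i - z i) * (pdv (f i) i x - pdv (f i) i z) < 0) :
    ∀ x z : Fin N → ℝ,
      (∀ (i : Fin N) (xi : ℝ), f i (Function.update x i xi) ≤ f i x) →
      (∀ (i : Fin N) (xi : ℝ), f i (Function.update z i xi) ≤ f i z) →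
      x = z := by
  intro x z hx hz
  by_contra hne
  have := hmono x z hne
  have hzero : ∀ i : Fin N, (x i - z i) * (pdv (f i) i x - pdv (f i) i z) = 0 := by
    intro i
    rw [pdv_eq_zero_of_max (hf i) (fun t => hx i t),
        pdv_eq_zero_of_max (hf i) (fun t => hz i t)]
    ring
  simp [hzero] at this
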